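/- Let q be a prime power, m ≥ 2 a divisor of q+1, N := (q+1)/m, and 2 ≤ n ≤ q−N an integer. Then the number of n-tuples (t_1,…,t_n) of positive integers such that for every k ∈ {1,…,n}, m·Σ_{s≠k} ⌈(t_k − t_s)/m⌉ + m·(q−n)·⌈t_k/m⌉ > q·t_k, equals Σ_{A=0}^{q−n−N} C(A+n−1, n−1)·S_n^A, where for each A one sets t_A := ⌈(q−A)/N⌉, β_A := q−A−N(t_A−1), λ_k^{(A)} := ⌈(k−β_A)/N⌉ + 1, and S_n^A is the cardinality of the union over all permutations σ of {1,…,n} of σ({(j_1,…,j_n) ∈ ℤ^n : 1 ≤ j_k ≤ t_A − λ_k^{(A)} for all k}). -/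

import Mathlib

/-- `t_A := ⌈(q-A)/N⌉`. -/
noncomputable def tA (q N A : ℕ) : ℤ := ⌈((q : ℚ) - (A : ℚ)) / (N : ℚ)⌉

/-- `β_A := q - A - N(t_A - 1)`. -/
noncomputable def betaA (q N A : ℕ) : ℤ := (q : ℤ) - (A : ℤ) - (N : ℤ) * (tA q N A - 1)

/-- `λ_k^{(A)} := ⌈(k-β_A)/N⌉ + 1` (for the 1-based index `k`). -/
noncomputable def lamA (q N A : ℕ) (k : ℕ) : ℤ :=
  ⌈((k : ℚ) - (betaA q N A : ℚ)) / (N : ℚ)⌉ + 1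

/-- `S_n^A`: the cardinality of the union over all permutations `σ` of `{1,…,n}` of
`σ({j ∈ ℤ^n | 1 ≤ j_k ≤ t_A - λ_k^{(A)} for all k})`. -/
noncomputable def SnA (q N n A : ℕ) : ℕ :=
  (⋃ σ : Equiv.Perm (Fin n), (fun j => j ∘ σ) ''
    {j : Fin n → ℤ | ∀ k : Fin n, 1 ≤ j k ∧ j k ≤ tA q N A - lamA q N A (k.val + 1)}).ncard

open Finset


/-- count of coordinates strictly below `e k`. -/
private def Lcnt {n : ℕ} (e : Fin n → ℤ) (k : Fin n) : ℕ :=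
  (Finset.univ.filter fun s => e s < e k).card

private lemma Lcnt_le {n : ℕ} (e : Fin n → ℤ) (k : Fin n) : Lcnt e k ≤ n := by
  classical
  exact le_trans (Finset.card_filter_le _ _) (by simp)

private lemma Lcnt_le_pred {n : ℕ} (e : Fin n → ℤ) (k : Fin n) (hn : 1 ≤ n) :
    Lcnt e k ≤ n - 1 := by
  classical
  have hsub : (Finset.univ.filter fun s => e s < e k) ⊆ Finset.univ.erase k := by
    intro s hs
    simp only [Finset.mem_filter] at hs
    refine Finset.mem_erase.2 ⟨?_, Finset.mem_univ _⟩
    rintro rfl; exact absurd hs.2 (lt_irrefl _)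
  have := Finset.card_le_card hsub
  simpa [Lcnt, Finset.card_erase_of_mem] using this

/-- ceiling of an integer division. -/
private lemma ceil_div_eq (m : ℕ) (hm : 0 < m) (x d : ℤ)
    (h1 : (m:ℤ) * (d - 1) < x) (h2 : x ≤ (m:ℤ) * d) :
    ⌈(x:ℚ) / (m:ℚ)⌉ = d := by
  have hm' : (0:ℚ) < (m:ℚ) := by exact_mod_cast hm
  rw [Int.ceil_eq_iff]
  constructor
  · rw [lt_div_iff₀ hm']
    have : ((d:ℚ) - 1) * (m:ℚ) = (((m:ℤ) * (d-1) : ℤ) : ℚ) := by push_cast; ring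
    rw [this]; exact_mod_cast h1
  · rw [div_le_iff₀ hm']
    have : (d:ℚ) * (m:ℚ) = (((m:ℤ) * d : ℤ) : ℚ) := by push_cast; ring
    rw [this]; exact_mod_cast h2

/-- the key arithmetic equivalence. -/
private lemma arith_iff (m N q n C L e : ℤ) (hm : 2 ≤ m) (hq : q + 1 = m * N)
    (he1 : 1 ≤ e) (he2 : e ≤ m) (hL : 0 ≤ L) (hLn : L ≤ n - 1) (hC : n ≤ C) :
    m * C < m * L + q * (m - e) ↔ (e ≤ m - 1 ∧ N * e + C ≤ q + L) := by
  have hm0 : (0:ℤ) < m := by linarith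
  constructor
  · intro h
    have hem : e ≤ m - 1 := by
      by_contra hcon
      have he : e = m := by omega
      have h0 : q * (m - e) = 0 := by rw [he]; ring
      have h1 : m * C < m * L := by linarith
      have : C < L := lt_of_mul_lt_mul_left h1 (by linarith)
      omega
    refine ⟨hem, ?_⟩
    have h2 : m * C < m * (L + N * (m - e)) - (m - e) := by
      have : q * (m - e) = m * (N * (m - e)) - (m - e) := by
        have : q = m * N - 1 := by linarith
        rw [this]; ring
      linarith
    have h3 : m * C < m * (L + N * (m - e)) := by
      have : (0:ℤ) < m - e := by omega
      linarith
    have h4 : C < L + N * (m - e) := lt_of_mul_lt_mul_left h3 (by linarith)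
    have : C + 1 ≤ L + N * m - N * e := by nlinarith
    have hNm : N * m = q + 1 := by linarith
    nlinarith
  · rintro ⟨hem, h⟩
    have hNm : N * m = q + 1 := by linarith
    have h4 : C + 1 ≤ L + N * (m - e) := by nlinarith
    have h5 : m * C ≤ m * (L + N * (m - e)) - m := by nlinarith
    have h6 : q * (m - e) = m * (N * (m - e)) - (m - e) := by
      have : q = m * N - 1 := by linarith
      rw [this]; ring
    nlinarith

private lemma bd_iff (q N A : ℕ) (hN : 0 < N) (v : ℤ) (i : ℕ) :
    v ≤ tA q N A - lamA q N A i ↔ (N:ℤ) * v ≤ (q:ℤ) - (A:ℤ) - (i:ℤ) := by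
  have hNQ : (0:ℚ) < (N:ℚ) := by exact_mod_cast hN
  have h1 : v ≤ tA q N A - lamA q N A i ↔
      ⌈((i : ℚ) - (betaA q N A : ℚ)) / (N : ℚ)⌉ ≤ tA q N A - 1 - v := by
    unfold lamA; omega
  have h2 : ((tA q N A - 1 - v : ℤ) : ℚ) * (N:ℚ) = (((tA q N A - 1 - v) * N : ℤ) : ℚ) := by
    push_cast; ring
  rw [h1, Int.ceil_le, div_le_iff₀ hNQ, h2]
  rw [show ((i:ℚ) - (betaA q N A : ℚ)) = (((i:ℤ) - betaA q N A : ℤ) : ℚ) by push_cast; ring]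
  rw [Int.cast_le]
  have hβ : betaA q N A = (q : ℤ) - A - N * (tA q N A - 1) := rfl
  constructor <;> intro h <;> nlinarith [h, hβ]

private def Uset (q N n A : ℕ) : Set (Fin n → ℤ) :=
  ⋃ σ : Equiv.Perm (Fin n), (fun j => j ∘ σ) ''
    {j : Fin n → ℤ | ∀ k : Fin n, 1 ≤ j k ∧ j k ≤ tA q N A - lamA q N A (k.val + 1)}

private lemma SnA_def (q N n A : ℕ) : SnA q N n A = (Uset q N n A).ncard := rfl

private lemma mem_U_iff (q N n A : ℕ) (hN : 0 < N) (e : Fin n → ℤ) :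
    e ∈ Uset q N n A ↔ ∃ τ : Equiv.Perm (Fin n), ∀ k : Fin n,
      1 ≤ e (τ k) ∧ (N:ℤ) * e (τ k) ≤ (q:ℤ) - (A:ℤ) - ((k.val:ℤ) + 1) := by
  have hcast : ∀ k : Fin n, (((k.val + 1 : ℕ)):ℤ) = (k.val:ℤ) + 1 := by intro k; push_cast; ring
  constructor
  · rintro hmem
    simp only [Uset, Set.mem_iUnion, Set.mem_image, Set.mem_setOf_eq] at hmem
    obtain ⟨σ, j, hj, hje⟩ := hmem
    refine ⟨σ.symm, fun k => ?_⟩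
    have hj2 : e (σ.symm k) = j k := by
      rw [← hje]; simp
    rw [hj2]
    refine ⟨(hj k).1, ?_⟩
    have := (bd_iff q N A hN (j k) (k.val + 1)).1 (hj k).2
    rwa [hcast k] at this
  · rintro ⟨τ, hτ⟩
    simp only [Uset, Set.mem_iUnion, Set.mem_image, Set.mem_setOf_eq]
    refine ⟨τ.symm, e ∘ τ, fun k => ⟨(hτ k).1, ?_⟩, ?_⟩
    · exact (bd_iff q N A hN _ _).2 (by rw [hcast k]; exact (hτ k).2)
    · funext x; simp

private def Eset (q N n A : ℕ) : Set (Fin n → ℤ) :=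
  {e | ∀ k, 1 ≤ e k ∧ (N:ℤ) * e k ≤ (q:ℤ) - (A:ℤ) - (n:ℤ) + (Lcnt e k : ℤ)}

private lemma Lcnt_card {n : ℕ} (e : Fin n → ℤ) (k : Fin n) :
    (Finset.univ.filter fun s => e k ≤ e s).card + Lcnt e k = n := by
  classical
  have := Finset.card_filter_add_card_filter_not (s := (Finset.univ : Finset (Fin n)))
    (p := fun s => e s < e k)
  simp only [Finset.card_univ, Fintype.card_fin, not_lt] at this
  rw [Lcnt]; omega

private lemma Eset_eq_Uset (q N n A : ℕ) (hN : 0 < N) : Eset q N n A = Uset q N n A := by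
  classical
  ext e
  rw [mem_U_iff q N n A hN]
  constructor
  · intro he
    set τ := Tuple.sort (fun k => - e k) with hτ
    have hanti : ∀ i k : Fin n, i ≤ k → e (τ k) ≤ e (τ i) := by
      intro i k hik
      have := Tuple.monotone_sort (fun k => - e k) hik
      simpa using this
    refine ⟨τ, fun k => ?_⟩
    refine ⟨(he (τ k)).1, ?_⟩
    have hcard : (k.val + 1) + Lcnt e (τ k) ≤ n := by
      have h1 : (Finset.image τ (Finset.Iic k)).card = k.val + 1 := by
        rw [Finset.card_image_of_injective _ τ.injective, Fin.card_Iic]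
      have h2 : Finset.image τ (Finset.Iic k) ⊆
          Finset.univ.filter (fun s => e (τ k) ≤ e s) := by
        intro x hx
        obtain ⟨i, hi, rfl⟩ := Finset.mem_image.1 hx
        exact Finset.mem_filter.2 ⟨Finset.mem_univ _, hanti i k (Finset.mem_Iic.1 hi)⟩
      have h3 := Finset.card_le_card h2
      have h4 := Lcnt_card e (τ k)
      omega
    have h5 := (he (τ k)).2
    have hcard' : Lcnt e (τ k) + (k.val + 1) ≤ n := by omega
    have h6 : (Lcnt e (τ k) : ℤ) + ((k.val:ℤ) + 1) ≤ (n:ℤ) := by exact_mod_cast hcard'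
    linarith
  · rintro ⟨τ, hτ⟩
    intro j
    have h1 : 1 ≤ e j := by
      have := (hτ (τ.symm j)).1
      rwa [Equiv.apply_symm_apply] at this
    refine ⟨h1, ?_⟩
    have hLc := Lcnt_card e j
    set Sge := Finset.univ.filter (fun s => e j ≤ e s) with hSge
    have hjS : j ∈ Sge := Finset.mem_filter.2 ⟨Finset.mem_univ _, le_refl _⟩
    set I := Sge.image τ.symm with hI
    have hIc : I.card = Sge.card := Finset.card_image_of_injective _ τ.symm.injective
    have hIne : I.Nonempty := ⟨τ.symm j, Finset.mem_image_of_mem _ hjS⟩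
    set i := I.max' hIne with hi
    have hiI : i ∈ I := I.max'_mem hIne
    have hsub : I ⊆ Finset.Iic i := fun x hx => Finset.mem_Iic.2 (I.le_max' x hx)
    have hcard : Sge.card ≤ i.val + 1 := by
      have := Finset.card_le_card hsub
      rwa [Fin.card_Iic, hIc] at this
    obtain ⟨s, hsS, hsi⟩ := Finset.mem_image.1 hiI
    have hes : e j ≤ e s := (Finset.mem_filter.1 hsS).2
    have hτi : τ i = s := by rw [← hsi, Equiv.apply_symm_apply]
    have hb := (hτ i).2
    rw [hτi] at hb
    have hmul : (N:ℤ) * e j ≤ (N:ℤ) * e s :=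
      mul_le_mul_of_nonneg_left hes (by positivity)
    have hc2' : n ≤ Lcnt e j + i.val + 1 := by omega
    have hc2 : (n:ℤ) ≤ (Lcnt e j : ℤ) + (i.val:ℤ) + 1 := by exact_mod_cast hc2'
    linarith

private lemma univ_sum_count {n : ℕ} (s : Multiset (Fin n)) :
    ∑ k : Fin n, s.count k = Multiset.card s := by
  classical
  rw [← Multiset.toFinset_sum_count_eq s]
  exact (Finset.sum_subset (Finset.subset_univ _) (fun x _ hx => by
    simp only [Multiset.mem_toFinset] at hx
    simp [Multiset.count_eq_zero_of_notMem hx])).symm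

private def msOf {n : ℕ} (d : Fin n → ℕ) : Multiset (Fin n) :=
  ∑ k : Fin n, d k • ({k} : Multiset (Fin n))

private lemma count_msOf {n : ℕ} (d : Fin n → ℕ) (j : Fin n) :
    (msOf d).count j = d j := by
  classical
  rw [msOf, Multiset.count_sum']
  have : ∀ k : Fin n, (d k • ({k} : Multiset (Fin n))).count j =
      if j = k then d k else 0 := by
    intro k
    rw [Multiset.count_nsmul, Multiset.count_singleton]
    split_ifs <;> simp
  simp only [this]
  simp

private noncomputable def CF (n A : ℕ) : Finset (Fin n → ℤ) :=
  (Fintype.piFinset fun _ : Fin n => Finset.Icc (1:ℤ) ((A:ℤ)+1)).filter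
    (fun c => ∑ k, c k = (n:ℤ) + (A:ℤ))

private lemma mem_CF {n A : ℕ} {c : Fin n → ℤ} :
    c ∈ CF n A ↔ (∀ k, 1 ≤ c k) ∧ ∑ k, c k = (n:ℤ) + (A:ℤ) := by
  classical
  simp only [CF, Finset.mem_filter, Fintype.mem_piFinset, Finset.mem_Icc]
  constructor
  · rintro ⟨h1, h2⟩; exact ⟨fun k => (h1 k).1, h2⟩
  · rintro ⟨h1, h2⟩
    refine ⟨fun k => ⟨h1 k, ?_⟩, h2⟩
    have hsub : Finset.univ.erase k ⊆ Finset.univ := Finset.erase_subset _ _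
    have h3 : ((Finset.univ.erase k).card) • (1:ℤ) ≤ ∑ s ∈ Finset.univ.erase k, c s := by
      apply Finset.card_nsmul_le_sum
      intro x hx; exact h1 x
    have h4 : c k + ∑ s ∈ Finset.univ.erase k, c s = ∑ s, c s :=
      Finset.add_sum_erase _ _ (Finset.mem_univ k)
    have h5 : (Finset.univ.erase k).card = n - 1 := by
      rw [Finset.card_erase_of_mem (Finset.mem_univ k)]; simp
    have hn1 : 1 ≤ n := Fin.pos k
    rw [h5] at h3
    simp only [nsmul_eq_mul, mul_one] at h3
    have h6 : ((n - 1 : ℕ) : ℤ) = (n:ℤ) - 1 := by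
      have : 1 ≤ n := hn1; push_cast [this]; ring
    rw [h6] at h3
    linarith [h2 ▸ h4, h3]

private lemma card_CF (n A : ℕ) (hn : 1 ≤ n) :
    (CF n A).card = (A + n - 1).choose (n - 1) := by
  classical
  have hcd : ∀ c ∈ CF n A, Multiset.card (msOf fun k => (c k - 1).toNat) = A := by
    intro c hc
    obtain ⟨h1, h2⟩ := mem_CF.1 hc
    have hc2 : ∀ k, ((c k - 1).toNat : ℤ) = c k - 1 := by
      intro k; rw [Int.toNat_of_nonneg]; linarith [h1 k]
    have hZ : ((∑ k, (c k - 1).toNat : ℕ) : ℤ) = (A:ℤ) := by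
      push_cast
      rw [Finset.sum_congr rfl (fun k _ => hc2 k), Finset.sum_sub_distrib]
      simp [h2]
    have hA : ∑ k, (c k - 1).toNat = A := by exact_mod_cast hZ
    rw [← univ_sum_count (msOf _), Finset.sum_congr rfl (fun k _ => count_msOf _ k)]
    exact hA
  have hbij : (CF n A).card = Fintype.card (Sym (Fin n) A) := by
    rw [Fintype.card]
    refine Finset.card_bij (fun c hc => (⟨msOf (fun k => (c k - 1).toNat), hcd c hc⟩ :
      Sym (Fin n) A)) (fun c hc => Finset.mem_univ _) ?_ ?_
    · intro c1 h1 c2 h2 heq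
      have hms : msOf (fun k => (c1 k - 1).toNat) = msOf (fun k => (c2 k - 1).toNat) :=
        Subtype.mk_eq_mk.1 heq
      funext k
      have hck := congrArg (Multiset.count k) hms
      rw [count_msOf, count_msOf] at hck
      obtain ⟨g1, _⟩ := mem_CF.1 h1
      obtain ⟨g2, _⟩ := mem_CF.1 h2
      have e1 : ((c1 k - 1).toNat : ℤ) = c1 k - 1 := Int.toNat_of_nonneg (by linarith [g1 k])
      have e2 : ((c2 k - 1).toNat : ℤ) = c2 k - 1 := Int.toNat_of_nonneg (by linarith [g2 k])
      have : ((c1 k - 1).toNat : ℤ) = ((c2 k - 1).toNat : ℤ) := by exact_mod_cast hck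
      omega
    · intro b _
      refine ⟨fun k => ((b : Multiset (Fin n)).count k : ℤ) + 1, ?_, ?_⟩
      · rw [mem_CF]
        constructor
        · intro k; omega
        · have hsum : ∑ k : Fin n, (b : Multiset (Fin n)).count k = A := by
            rw [univ_sum_count]; exact b.2
          rw [Finset.sum_add_distrib]
          simp only [Finset.sum_const, Finset.card_univ, Fintype.card_fin, smul_eq_mul, mul_one]
          rw [show ∑ k : Fin n, ((b : Multiset (Fin n)).count k : ℤ) =
            ((∑ k : Fin n, (b : Multiset (Fin n)).count k : ℕ) : ℤ) by push_cast; rfl]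
          rw [hsum]; ring
      · apply Subtype.ext
        simp only
        apply Multiset.ext.2
        intro j
        rw [count_msOf]
        simp
  rw [hbij, Sym.card_sym_eq_choose]
  simp only [Fintype.card_fin]
  have h1 : n + A - 1 = A + n - 1 := by omega
  have h2 : (A + n - 1).choose (n-1) = (A + n - 1).choose A := by
    have h3 : n - 1 ≤ A + n - 1 := by omega
    have h4 : A + n - 1 - (n - 1) = A := by omega
    rw [← Nat.choose_symm h3, h4]
  rw [h1, h2]

private noncomputable def EF (q N m n A : ℕ) : Finset (Fin n → ℤ) :=
  (Fintype.piFinset fun _ : Fin n => Finset.Icc (1:ℤ) ((m:ℤ)-1)).filter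
    (fun e => ∀ k, (N:ℤ) * e k ≤ (q:ℤ) - (A:ℤ) - (n:ℤ) + (Lcnt e k : ℤ))

private lemma coe_EF (q N m n A : ℕ) (hq : (q:ℤ) + 1 = (m:ℤ) * (N:ℤ)) (hN : 0 < N) :
    (↑(EF q N m n A) : Set (Fin n → ℤ)) = Eset q N n A := by
  classical
  ext e
  simp only [EF, Finset.coe_filter, Set.mem_setOf_eq, Fintype.mem_piFinset, Finset.mem_Icc,
    Eset]
  constructor
  · rintro ⟨h1, h2⟩
    exact fun k => ⟨(h1 k).1, h2 k⟩
  · intro h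
    refine ⟨fun k => ⟨(h k).1, ?_⟩, fun k => (h k).2⟩
    have hL : (Lcnt e k : ℤ) ≤ (n : ℤ) := by exact_mod_cast Lcnt_le e k
    have h2 : (N:ℤ) * e k ≤ (q:ℤ) := by have := (h k).2; linarith [hL, Int.ofNat_nonneg A]
    have h3 : (N:ℤ) * e k < (N:ℤ) * (m:ℤ) := by nlinarith
    have h4 : e k < (m:ℤ) := lt_of_mul_lt_mul_left h3 (by positivity)
    omega

private lemma SnA_eq_card (q N m n A : ℕ) (hq : (q:ℤ) + 1 = (m:ℤ) * (N:ℤ)) (hN : 0 < N) :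
    SnA q N n A = (EF q N m n A).card := by
  rw [SnA_def, ← Eset_eq_Uset q N n A hN, ← coe_EF q N m n A hq hN, Set.ncard_coe_finset]

private def Phi (m : ℕ) {n : ℕ} (p : (Fin n → ℤ) × (Fin n → ℤ)) : Fin n → ℤ :=
  fun k => (m:ℤ) * (p.1 k - 1) + p.2 k

private lemma decomp_unique (m : ℕ) (c c' e e' : ℤ) (hm : 1 ≤ m)
    (h1 : 1 ≤ e) (h2 : e ≤ m) (h1' : 1 ≤ e') (h2' : e' ≤ m)
    (heq : (m:ℤ) * (c - 1) + e = (m:ℤ) * (c' - 1) + e') : c = c' ∧ e = e' := by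
  have hm0 : (0:ℤ) < (m:ℤ) := by exact_mod_cast hm
  have key : (m:ℤ) * (c - c') = e' - e := by linarith [heq]
  rcases lt_trichotomy c c' with h | h | h
  · exfalso
    have : c - c' ≤ -1 := by omega
    nlinarith
  · constructor
    · exact h
    · rw [h] at key; simp at key; linarith
  · exfalso
    have : 1 ≤ c - c' := by omega
    nlinarith

private lemma cond_iff (q m N n : ℕ) (hm : 2 ≤ m) (hq : (q:ℤ) + 1 = (m:ℤ) * (N:ℤ))
    (hn : 2 ≤ n) (c e : Fin n → ℤ) (hc : ∀ k, 1 ≤ c k)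
    (he : ∀ k, 1 ≤ e k ∧ e k ≤ (m:ℤ)) (k : Fin n) :
    ((m:ℤ) * (∑ s ∈ Finset.univ.erase k,
        ⌈((Phi m (c, e) k : ℚ) - (Phi m (c, e) s : ℚ)) / (m:ℚ)⌉)
      + (m:ℤ) * ((q:ℤ) - (n:ℤ)) * ⌈(Phi m (c, e) k : ℚ) / (m:ℚ)⌉
      > (q:ℤ) * Phi m (c, e) k)
    ↔ (e k ≤ (m:ℤ) - 1 ∧ (N:ℤ) * e k + ∑ s, c s ≤ (q:ℤ) + (Lcnt e k : ℤ)) := by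
  classical
  have hm0 : 0 < m := by omega
  have hmZ : (2:ℤ) ≤ (m:ℤ) := by exact_mod_cast hm
  -- ceiling of Phi k / m
  have hceil1 : ⌈(Phi m (c, e) k : ℚ) / (m:ℚ)⌉ = c k := by
    apply ceil_div_eq m hm0
    · simp only [Phi]; linarith [(he k).1]
    · simp only [Phi]; linarith [(he k).2]
  -- ceiling of differences
  have hceil2 : ∀ s : Fin n, ⌈((Phi m (c, e) k : ℚ) - (Phi m (c, e) s : ℚ)) / (m:ℚ)⌉
      = c k - c s + (if e s < e k then 1 else 0) := by
    intro s
    have hcast : (Phi m (c, e) k : ℚ) - (Phi m (c, e) s : ℚ)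
        = ((Phi m (c, e) k - Phi m (c, e) s : ℤ) : ℚ) := by push_cast; ring
    rw [hcast]
    apply ceil_div_eq m hm0
    · split_ifs with hlt
      · simp only [Phi]; push_cast; nlinarith [(he s).1, (he k).2]
      · simp only [Phi]; push_cast
        push_neg at hlt
        nlinarith [(he k).1, (he s).2]
    · split_ifs with hlt
      · simp only [Phi]; push_cast; nlinarith [(he s).1, (he k).2]
      · simp only [Phi]; push_cast
        push_neg at hlt
        nlinarith [(he k).1, (he s).2]
  rw [hceil1, Finset.sum_congr rfl (fun s _ => hceil2 s)]
  -- compute the sum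
  have hsum : ∑ s ∈ Finset.univ.erase k, (c k - c s + (if e s < e k then 1 else 0))
      = ((n:ℤ) - 1) * c k - (∑ s, c s - c k) + (Lcnt e k : ℤ) := by
    rw [Finset.sum_add_distrib, Finset.sum_sub_distrib, Finset.sum_const]
    have hcard : (Finset.univ.erase k).card = n - 1 := by
      rw [Finset.card_erase_of_mem (Finset.mem_univ k)]; simp
    have hce : ∑ s ∈ Finset.univ.erase k, c s = ∑ s, c s - c k := by
      have := Finset.add_sum_erase Finset.univ c (Finset.mem_univ k)
      linarith
    have hite : ∑ s ∈ Finset.univ.erase k, (if e s < e k then (1:ℤ) else 0)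
        = (Lcnt e k : ℤ) := by
      rw [Finset.sum_boole]
      congr 1
      rw [Lcnt]
      congr 1
      ext s
      simp only [Finset.mem_filter, Finset.mem_erase, Finset.mem_univ, true_and, and_true]
      constructor
      · rintro ⟨-, h1⟩; exact h1
      · intro h1; exact ⟨by rintro rfl; exact absurd h1 (lt_irrefl _), h1⟩
    rw [hce, hite, hcard]
    have : ((n - 1 : ℕ) : ℤ) = (n:ℤ) - 1 := by omega
    rw [nsmul_eq_mul, hcard] at *
    push_cast [show 1 ≤ n by omega]
    ring
  rw [hsum]
  -- now pure arithmetic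
  set C := ∑ s, c s with hC
  set L := (Lcnt e k : ℤ) with hL
  have hCn : (n:ℤ) ≤ C := by
    have h3 : ((Finset.univ : Finset (Fin n)).card) • (1:ℤ) ≤ ∑ s, c s :=
      Finset.card_nsmul_le_sum _ _ _ (fun x _ => hc x)
    simp only [Finset.card_univ, Fintype.card_fin, nsmul_eq_mul, mul_one] at h3
    exact h3
  have hL0 : (0:ℤ) ≤ L := by positivity
  have hLn : L ≤ (n:ℤ) - 1 := by
    have := Lcnt_le_pred e k (by omega)
    have h2 : (Lcnt e k : ℤ) ≤ ((n - 1 : ℕ) : ℤ) := by exact_mod_cast this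
    omega
  have hkey : (m:ℤ) * (((n:ℤ) - 1) * c k - (C - c k) + L) + (m:ℤ) * ((q:ℤ) - (n:ℤ)) * c k
      - (q:ℤ) * Phi m (c, e) k = (m:ℤ) * L + (q:ℤ) * ((m:ℤ) - e k) - (m:ℤ) * C := by
    simp only [Phi]; ring
  have harith := arith_iff (m:ℤ) (N:ℤ) (q:ℤ) (n:ℤ) C L (e k) hmZ hq (he k).1 (he k).2
    hL0 hLn hCn
  constructor
  · intro h
    have h2 : (m:ℤ) * C < (m:ℤ) * L + (q:ℤ) * ((m:ℤ) - e k) := by linarith [hkey]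
    exact harith.1 h2
  · intro h
    have h2 := harith.2 h
    have := hkey
    linarith

/-- For a prime power `q`, a divisor `m ≥ 2` of `q+1` with `N = (q+1)/m`,
and `2 ≤ n ≤ q-N`, the number of pure gap `n`-tuples of the quotient Hermitian curve
equals `Σ_{A=0}^{q-n-N} C(A+n-1, n-1)·S_n^A`. -/
theorem stmt_15 (q m N n : ℕ) (hq : IsPrimePow q) (hm : 2 ≤ m) (hdvd : m ∣ q + 1)
    (hN : q + 1 = m * N) (hn : 2 ≤ n) (hnq : (n : ℤ) ≤ (q : ℤ) - (N : ℤ)) :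
    ({t : Fin n → ℤ | (∀ k, 1 ≤ t k) ∧ ∀ k : Fin n,
        (m : ℤ) * (∑ s ∈ Finset.univ.erase k, ⌈((t k : ℚ) - (t s : ℚ)) / (m : ℚ)⌉)
          + (m : ℤ) * ((q : ℤ) - (n : ℤ)) * ⌈(t k : ℚ) / (m : ℚ)⌉
          > (q : ℤ) * t k}).ncard
      = ∑ A ∈ Finset.range (q - n - N + 1), (A + n - 1).choose (n - 1) * SnA q N n A := by
  classical
  have hN0 : 0 < N := by
    rcases Nat.eq_zero_or_pos N with h | h
    · subst h; omega
    · exact h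
  have hqZ : (q:ℤ) + 1 = (m:ℤ) * (N:ℤ) := by exact_mod_cast hN
  set K := q - n - N with hK
  set PF := (Finset.range (K+1)).biUnion (fun A => (CF n A) ×ˢ (EF q N m n A)) with hPF
  set TF := PF.image (Phi m) with hTF
  have hEmem : ∀ (A : ℕ) (p : (Fin n → ℤ) × (Fin n → ℤ)), p ∈ (CF n A) ×ˢ (EF q N m n A) →
      (∀ k, 1 ≤ p.1 k) ∧ (∑ s, p.1 s = (n:ℤ) + A) ∧
      (∀ k, 1 ≤ p.2 k ∧ p.2 k ≤ (m:ℤ) - 1) ∧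
      (∀ k, (N:ℤ) * p.2 k ≤ (q:ℤ) - (A:ℤ) - (n:ℤ) + (Lcnt p.2 k : ℤ)) := by
    intro A p hp
    rw [Finset.mem_product] at hp
    obtain ⟨hp1, hp2⟩ := hp
    rw [mem_CF] at hp1
    rw [EF, Finset.mem_filter, Fintype.mem_piFinset] at hp2
    refine ⟨hp1.1, hp1.2, fun k => ?_, hp2.2⟩
    have := hp2.1 k
    rw [Finset.mem_Icc] at this
    exact this
  have hTset : {t : Fin n → ℤ | (∀ k, 1 ≤ t k) ∧ ∀ k : Fin n,
        (m : ℤ) * (∑ s ∈ Finset.univ.erase k, ⌈((t k : ℚ) - (t s : ℚ)) / (m : ℚ)⌉)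
          + (m : ℤ) * ((q : ℤ) - (n : ℤ)) * ⌈(t k : ℚ) / (m : ℚ)⌉
          > (q : ℤ) * t k} = ↑TF := by
    ext t
    simp only [Set.mem_setOf_eq, hTF, Finset.coe_image, Set.mem_image, Finset.mem_coe]
    constructor
    · rintro ⟨ht1, ht2⟩
      set c : Fin n → ℤ := fun k => (t k - 1) / (m:ℤ) + 1 with hcdef
      set e : Fin n → ℤ := fun k => (t k - 1) % (m:ℤ) + 1 with hedef
      have hmZ : (0:ℤ) < (m:ℤ) := by exact_mod_cast (by omega : 0 < m)
      have hid : ∀ k, Phi m (c, e) k = t k := by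
        intro k
        simp only [Phi, hcdef, hedef]
        have h1 := Int.mul_ediv_add_emod (t k - 1) (m:ℤ)
        have h2 : (m:ℤ) * ((t k - 1) / (m:ℤ) + 1 - 1) = (m:ℤ) * ((t k - 1) / (m:ℤ)) := by ring
        linarith
      have hPhi : Phi m (c, e) = t := funext hid
      have hck : ∀ k, 1 ≤ c k := by
        intro k
        have : 0 ≤ (t k - 1) / (m:ℤ) := Int.ediv_nonneg (by linarith [ht1 k]) (by linarith)
        simp only [hcdef]; linarith
      have hek : ∀ k, 1 ≤ e k ∧ e k ≤ (m:ℤ) := by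
        intro k
        have h1 := Int.emod_nonneg (t k - 1) (ne_of_gt hmZ)
        have h2 := Int.emod_lt_of_pos (t k - 1) hmZ
        simp only [hedef]
        constructor <;> linarith
      rw [← hPhi] at ht2
      have hcond : ∀ k, e k ≤ (m:ℤ) - 1 ∧
          (N:ℤ) * e k + ∑ s, c s ≤ (q:ℤ) + (Lcnt e k : ℤ) :=
        fun k => (cond_iff q m N n hm hqZ hn c e hck hek k).1 (ht2 k)
      have hCn : (n:ℤ) ≤ ∑ s, c s := by
        have h3 : ((Finset.univ : Finset (Fin n)).card) • (1:ℤ) ≤ ∑ s, c s :=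
          Finset.card_nsmul_le_sum _ _ _ (fun x _ => hck x)
        simpa using h3
      set A := (∑ s, c s - n).toNat with hAdef
      have hAeq : (A:ℤ) = ∑ s, c s - n := Int.toNat_of_nonneg (by linarith)
      obtain ⟨k₀, -, hk₀⟩ := Finset.exists_min_image Finset.univ e
        ⟨⟨0, by omega⟩, Finset.mem_univ _⟩
      have hL0 : Lcnt e k₀ = 0 := by
        rw [Lcnt, Finset.card_eq_zero, Finset.filter_eq_empty_iff]
        intro s _
        exact not_lt.2 (hk₀ s (Finset.mem_univ s))
      have hbound := (hcond k₀).2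
      rw [hL0] at hbound
      have hNle : (N:ℤ) * 1 ≤ (N:ℤ) * e k₀ :=
        mul_le_mul_of_nonneg_left (hek k₀).1 (by positivity)
      have hAK : (A:ℤ) ≤ (q:ℤ) - (n:ℤ) - (N:ℤ) := by
        simp only [Nat.cast_zero] at hbound
        linarith
      have hAK' : A < K + 1 := by
        rw [hK]; omega
      refine ⟨(c, e), ?_, hPhi⟩
      rw [hPF]
      refine Finset.mem_biUnion.2 ⟨A, Finset.mem_range.2 hAK', ?_⟩
      rw [Finset.mem_product]
      constructor
      · rw [mem_CF]; exact ⟨hck, by linarith⟩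
      · rw [EF, Finset.mem_filter, Fintype.mem_piFinset]
        constructor
        · intro k; rw [Finset.mem_Icc]; exact ⟨(hek k).1, (hcond k).1⟩
        · intro k
          have := (hcond k).2
          linarith
    · rintro ⟨p, hp, rfl⟩
      rw [hPF] at hp
      obtain ⟨A, hAr, hpA⟩ := Finset.mem_biUnion.1 hp
      obtain ⟨c, e⟩ := p
      obtain ⟨hc1, hc2, he1, he2⟩ := hEmem A (c, e) hpA
      have hek : ∀ k, 1 ≤ e k ∧ e k ≤ (m:ℤ) := by
        intro k; have := he1 k; constructor <;> linarith [this.1, this.2]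
      constructor
      · intro k
        simp only [Phi]
        have : (0:ℤ) ≤ (m:ℤ) * (c k - 1) :=
          mul_nonneg (by positivity) (by linarith [hc1 k])
        linarith [(hek k).1]
      · intro k
        apply (cond_iff q m N n hm hqZ hn c e hc1 hek k).2
        exact ⟨(he1 k).2, by linarith [he2 k]⟩
  rw [hTset, Set.ncard_coe_finset, hTF]
  have hinj : Set.InjOn (Phi m) (PF : Set ((Fin n → ℤ) × (Fin n → ℤ))) := by
    intro p hp p' hp' heq
    rw [hPF, Finset.coe_biUnion] at hp hp'
    simp only [Set.mem_iUnion, Finset.mem_coe] at hp hp'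
    obtain ⟨A, _, hpA⟩ := hp
    obtain ⟨B, _, hpB⟩ := hp'
    obtain ⟨-, -, heA, -⟩ := hEmem A p hpA
    obtain ⟨-, -, heB, -⟩ := hEmem B p' hpB
    have hall : ∀ k, p.1 k = p'.1 k ∧ p.2 k = p'.2 k := by
      intro k
      have hk := congrFun heq k
      simp only [Phi] at hk
      exact decomp_unique m (p.1 k) (p'.1 k) (p.2 k) (p'.2 k) (by omega)
        (heA k).1 (by linarith [(heA k).2]) (heB k).1 (by linarith [(heB k).2]) hk
    exact Prod.ext (funext fun k => (hall k).1) (funext fun k => (hall k).2)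
  rw [Finset.card_image_of_injOn hinj, hPF]
  rw [Finset.card_biUnion ?disj]
  case disj =>
    intro A hA B hB hAB
    rw [Function.onFun, Finset.disjoint_left]
    intro p hpA hpB
    obtain ⟨-, hsA, -, -⟩ := hEmem A p hpA
    obtain ⟨-, hsB, -, -⟩ := hEmem B p hpB
    rw [hsA] at hsB
    have : (A:ℤ) = (B:ℤ) := by linarith
    exact hAB (by exact_mod_cast this)
  apply Finset.sum_congr rfl
  intro A _
  rw [Finset.card_product, card_CF n A (by omega), SnA_eq_card q N m n A hqZ hN0]
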